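/- Let (Γ, σ) be a finite measure space and j : ℝ → ℝ locally Lipschitz with Clarke subdifferential satisfying the growth condition |ξ| ≤ c₁ + c₂|u| for all ξ ∈ ∂j(u), with c₁, c₂ > 0. For u ∈ L²(Γ) define S(u) = {ξ ∈ L²(Γ) : ξ(x) ∈ ∂j(u(x)) for a.e. x}. Then for every u ∈ L²(Γ), the set S(u) is nonempty, bounded, closed and convex in L²(Γ), and every ξ ∈ S(u) satisfies ‖ξ‖²_{L²} ≤ 2c₁²σ(Γ) + 2c₂²‖u‖²_{L²}. -/

import Mathlib

open MeasureTheory Filter Set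

noncomputable def clarkeDirDeriv (j : ℝ → ℝ) (u v : ℝ) : ℝ :=
  Filter.limsup (fun p : ℝ × ℝ => (j (p.1 + p.2 * v) - j p.1) / p.2)
    ((nhds u) ×ˢ (nhdsWithin 0 (Set.Ioi 0)))

noncomputable def clarkeSubdiff (j : ℝ → ℝ) (u : ℝ) : Set ℝ :=
  {ξ : ℝ | ∀ v : ℝ, ξ * v ≤ clarkeDirDeriv j u v}

lemma clarke_bdd {j : ℝ → ℝ} (hj : LocallyLipschitz j) (s v : ℝ) :
    ∃ K : ℝ, 0 ≤ K ∧ ∀ᶠ p in (nhds s ×ˢ nhdsWithin 0 (Set.Ioi (0:ℝ))),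
      |(j (p.1 + p.2 * v) - j p.1) / p.2| ≤ K := by
  obtain ⟨K, t, ht, hK⟩ := hj s
  obtain ⟨ε, hε, hball⟩ := Metric.mem_nhds_iff.1 ht
  refine ⟨K * |v|, by positivity, ?_⟩
  have h1 : ∀ᶠ x in nhds s, x ∈ Metric.ball s (ε/2) :=
    Metric.ball_mem_nhds s (by positivity)
  have h2 : ∀ᶠ y in nhdsWithin 0 (Set.Ioi (0:ℝ)), y ∈ Set.Ioo 0 (ε/(2*(|v|+1))) :=
    Ioo_mem_nhdsGT_of_mem ⟨le_refl 0, by positivity⟩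
  filter_upwards [h1.prod_mk h2] with p hp
  obtain ⟨hp1, hp2⟩ := hp
  have hv1 : (0:ℝ) < |v| + 1 := by positivity
  have hx : p.1 ∈ t := hball (by
    have := hp1
    simp only [Metric.mem_ball] at this ⊢
    linarith [this])
  have hy : p.1 + p.2 * v ∈ t := by
    apply hball
    simp only [Metric.mem_ball, Real.dist_eq] at hp1 ⊢
    have h3 : |p.2 * v| ≤ (ε/(2*(|v|+1))) * |v| := by
      rw [abs_mul]
      apply mul_le_mul_of_nonneg_right _ (abs_nonneg v)
      rw [abs_of_pos hp2.1]
      exact hp2.2.le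
    have h4 : (ε/(2*(|v|+1))) * |v| < ε/2 := by
      rw [div_mul_eq_mul_div, div_lt_div_iff₀ (by positivity) (by norm_num)]
      nlinarith [abs_nonneg v]
    calc |p.1 + p.2 * v - s| ≤ |p.1 - s| + |p.2 * v| := by
          have : p.1 + p.2 * v - s = (p.1 - s) + p.2 * v := by ring
          rw [this]; exact abs_add_le _ _
      _ < ε/2 + ε/2 := by linarith
      _ = ε := by ring
  have hlip := hK.dist_le_mul _ hy _ hx
  simp only [Real.dist_eq] at hlip
  have hj' : |j (p.1 + p.2 * v) - j p.1| ≤ K * (p.2 * |v|) := by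
    calc |j (p.1 + p.2 * v) - j p.1| ≤ K * |p.1 + p.2 * v - p.1| := hlip
      _ = K * (p.2 * |v|) := by
          rw [add_sub_cancel_left, abs_mul, abs_of_pos hp2.1]
  rw [abs_div, abs_of_pos hp2.1, div_le_iff₀ hp2.1]
  calc |j (p.1 + p.2 * v) - j p.1| ≤ K * (p.2 * |v|) := hj'
    _ = K * |v| * p.2 := by ring


lemma clarke_isBoundedUnder_le {j : ℝ → ℝ} (hj : LocallyLipschitz j) (s v : ℝ) :
    IsBoundedUnder (· ≤ ·) (nhds s ×ˢ nhdsWithin 0 (Set.Ioi (0:ℝ)))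
      (fun p : ℝ × ℝ => (j (p.1 + p.2 * v) - j p.1) / p.2) := by
  obtain ⟨K, _, hK⟩ := clarke_bdd hj s v
  exact ⟨K, hK.mono fun p hp => (abs_le.1 hp).2⟩

lemma clarke_isBoundedUnder_ge {j : ℝ → ℝ} (hj : LocallyLipschitz j) (s v : ℝ) :
    IsBoundedUnder (· ≥ ·) (nhds s ×ˢ nhdsWithin 0 (Set.Ioi (0:ℝ)))
      (fun p : ℝ × ℝ => (j (p.1 + p.2 * v) - j p.1) / p.2) := by
  obtain ⟨K, _, hK⟩ := clarke_bdd hj s v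
  exact ⟨-K, hK.mono fun p hp => (abs_le.1 hp).1⟩

lemma clarke_isCoboundedUnder_le {j : ℝ → ℝ} (hj : LocallyLipschitz j) (s v : ℝ) :
    IsCoboundedUnder (· ≤ ·) (nhds s ×ˢ nhdsWithin 0 (Set.Ioi (0:ℝ)))
      (fun p : ℝ × ℝ => (j (p.1 + p.2 * v) - j p.1) / p.2) :=
  (clarke_isBoundedUnder_ge hj s v).isCoboundedUnder_le

lemma map_mul_right_nhdsWithin_Ioi {v : ℝ} (hv : 0 < v) :
    Filter.map (fun t : ℝ => t * v) (nhdsWithin 0 (Set.Ioi (0:ℝ)))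
      = nhdsWithin 0 (Set.Ioi (0:ℝ)) := by
  have h := (Homeomorph.mulRight₀ v hv.ne').isEmbedding.map_nhdsWithin_eq (Set.Ioi 0) 0
  have himg : (Homeomorph.mulRight₀ v hv.ne') '' (Set.Ioi 0) = Set.Ioi (0:ℝ) := by
    ext x
    simp only [Set.mem_image, Set.mem_Ioi, Homeomorph.coe_mulRight₀]
    constructor
    · rintro ⟨y, hy, rfl⟩
      exact mul_pos hy hv
    · intro hx
      exact ⟨x / v, div_pos hx hv, by field_simp⟩
  rw [himg] at h
  simpa using h

lemma clarke_zero (j : ℝ → ℝ) (s : ℝ) : clarkeDirDeriv j s 0 = 0 := by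
  unfold clarkeDirDeriv
  have : (fun p : ℝ × ℝ => (j (p.1 + p.2 * 0) - j p.1) / p.2) = fun _ => (0:ℝ) := by
    funext p; simp
  rw [this]
  exact limsup_const 0

lemma clarke_homog {j : ℝ → ℝ} (hj : LocallyLipschitz j) (s : ℝ) {v : ℝ} (hv : 0 < v) :
    clarkeDirDeriv j s v = v * clarkeDirDeriv j s 1 := by
  have hmap : Filter.map (Prod.map (id : ℝ → ℝ) (fun t : ℝ => t * v))
      (nhds s ×ˢ nhdsWithin 0 (Set.Ioi (0:ℝ))) = nhds s ×ˢ nhdsWithin 0 (Set.Ioi (0:ℝ)) := by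
    rw [← Filter.prod_map_map_eq', Filter.map_id, map_mul_right_nhdsWithin_Ioi hv]
  set l := nhds s ×ˢ nhdsWithin 0 (Set.Ioi (0:ℝ)) with hl
  set G : ℝ × ℝ → ℝ := fun q => (j (q.1 + q.2 * 1) - j q.1) / q.2 with hG
  set m : ℝ × ℝ → ℝ × ℝ := Prod.map (id : ℝ → ℝ) (fun t : ℝ => t * v) with hm
  have hcongr : clarkeDirDeriv j s v = limsup (fun p : ℝ × ℝ => v * G (m p)) l := by
    unfold clarkeDirDeriv
    apply limsup_congr
    have hpos : ∀ᶠ p : ℝ × ℝ in l, 0 < p.2 := by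
      apply Filter.Eventually.prod_inr
      exact eventually_mem_nhdsWithin
    filter_upwards [hpos] with p hp
    simp only [hG, hm, mul_one, Prod.map, id_eq]
    field_simp
  rw [hcongr]
  have hGeq : ∀ p : ℝ × ℝ, G (m p) = ((j (p.1 + p.2 * v) - j p.1) / p.2) / v := by
    intro p
    simp only [hG, hm, mul_one, Prod.map, id_eq]
    rw [div_div]
  have hGm_bdd : IsBoundedUnder (· ≤ ·) l (fun p => G (m p)) := by
    obtain ⟨K, _, hK⟩ := clarke_bdd hj s v
    refine ⟨K / v, hK.mono fun p hp => ?_⟩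
    show G (m p) ≤ K / v
    rw [hGeq p, div_le_div_iff_of_pos_right hv]
    exact (abs_le.1 hp).2
  have hGm_cobdd : IsCoboundedUnder (· ≤ ·) l (fun p => G (m p)) := by
    obtain ⟨K, _, hK⟩ := clarke_bdd hj s v
    apply IsBoundedUnder.isCoboundedUnder_le
    refine ⟨-(K / v), hK.mono fun p hp => ?_⟩
    show -(K / v) ≤ G (m p)
    rw [hGeq p, ← neg_div, div_le_div_iff_of_pos_right hv]
    exact (abs_le.1 hp).1
  have hmul : (fun x : ℝ => v * x) (limsup (fun p => G (m p)) l)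
      = limsup ((fun x : ℝ => v * x) ∘ (fun p => G (m p))) l := by
    apply Monotone.map_limsup_of_continuousAt
    · intro a b hab; exact mul_le_mul_of_nonneg_left hab hv.le
    · exact (continuous_const.mul continuous_id).continuousAt
    · exact hGm_bdd
    · exact hGm_cobdd
  have hcomp : limsup (fun p => G (m p)) l = clarkeDirDeriv j s 1 := by
    have h1 : (fun p => G (m p)) = G ∘ m := rfl
    rw [h1]
    unfold clarkeDirDeriv
    rw [Filter.limsup, Filter.limsup, ← Filter.map_map, hl, hmap]
  rw [show (fun p : ℝ × ℝ => v * G (m p)) = (fun x : ℝ => v * x) ∘ (fun p => G (m p)) from rfl,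
    ← hmul, hcomp]

lemma clarke_subadd {j : ℝ → ℝ} (hj : LocallyLipschitz j) (s v w : ℝ) :
    clarkeDirDeriv j s (v + w) ≤ clarkeDirDeriv j s v + clarkeDirDeriv j s w := by
  set l := nhds s ×ˢ nhdsWithin 0 (Set.Ioi (0:ℝ)) with hl
  set Fv : ℝ × ℝ → ℝ := fun p => (j (p.1 + p.2 * v) - j p.1) / p.2 with hFv
  set Fw : ℝ × ℝ → ℝ := fun p => (j (p.1 + p.2 * w) - j p.1) / p.2 with hFw
  set m : ℝ × ℝ → ℝ × ℝ := fun p => (p.1 + p.2 * v, p.2) with hm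
  have htend : Filter.Tendsto m l l := by
    apply Filter.Tendsto.prodMk
    · rw [hl]
      have h1 : Filter.Tendsto (fun p : ℝ × ℝ => p.1) l (nhds s) := tendsto_fst
      have h2 : Filter.Tendsto (fun p : ℝ × ℝ => p.2) l (nhds 0) :=
        tendsto_snd.mono_right nhdsWithin_le_nhds
      have := h1.add ((h2.mul_const v))
      simpa using this
    · exact tendsto_snd
  have hsum : clarkeDirDeriv j s (v + w) = limsup (fun p => Fw (m p) + Fv p) l := by
    unfold clarkeDirDeriv
    apply limsup_congr
    apply Filter.Eventually.of_forall
    intro p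
    simp only [hFv, hFw, hm]
    have h1 : p.1 + p.2 * (v + w) = (p.1 + p.2 * v) + p.2 * w := by ring
    rw [h1, ← add_div]
    ring_nf
  rw [hsum]
  have hFwm_bdd_ge : IsBoundedUnder (· ≥ ·) l (fun p => Fw (m p)) := by
    obtain ⟨K, hK⟩ := clarke_isBoundedUnder_ge hj s w
    exact ⟨K, htend.eventually hK⟩
  have hFwm_bdd_le : IsBoundedUnder (· ≤ ·) l (fun p => Fw (m p)) := by
    obtain ⟨K, hK⟩ := clarke_isBoundedUnder_le hj s w
    exact ⟨K, htend.eventually hK⟩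
  calc limsup (fun p => Fw (m p) + Fv p) l
      ≤ limsup (fun p => Fw (m p)) l + limsup Fv l := by
        apply limsup_add_le hFwm_bdd_ge hFwm_bdd_le
          (clarke_isCoboundedUnder_le hj s v) (clarke_isBoundedUnder_le hj s v)
    _ ≤ clarkeDirDeriv j s w + clarkeDirDeriv j s v := by
        apply add_le_add_left
        have h1 : limsup (fun p => Fw (m p)) l = limsup Fw (Filter.map m l) := by
          rw [Filter.limsup, Filter.limsup, Filter.map_map]; rfl
        rw [h1]
        have hc : IsCoboundedUnder (· ≤ ·) (Filter.map m l) Fw := by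
          have h2 := hFwm_bdd_ge.isCoboundedUnder_le
          unfold IsCoboundedUnder at h2 ⊢
          rw [Filter.map_map]
          exact h2
        exact limsup_le_limsup_of_le htend hc (clarke_isBoundedUnder_le hj s w)
    _ = clarkeDirDeriv j s v + clarkeDirDeriv j s w := add_comm _ _

lemma clarke_mem {j : ℝ → ℝ} (hj : LocallyLipschitz j) (s : ℝ) :
    clarkeDirDeriv j s 1 ∈ clarkeSubdiff j s := by
  intro v
  rcases lt_trichotomy v 0 with hv | hv | hv
  · have hpos : 0 < -v := by linarith
    have h1 : clarkeDirDeriv j s (-v) = (-v) * clarkeDirDeriv j s 1 := clarke_homog hj s hpos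
    have h2 : clarkeDirDeriv j s (v + -v) ≤ clarkeDirDeriv j s v + clarkeDirDeriv j s (-v) :=
      clarke_subadd hj s v (-v)
    rw [show v + -v = 0 by ring, clarke_zero] at h2
    rw [h1] at h2
    linarith
  · rw [hv, clarke_zero, mul_zero]
  · rw [clarke_homog hj s hv, mul_comm]

lemma clarke_usc {j : ℝ → ℝ} (hj : LocallyLipschitz j) :
    UpperSemicontinuous (fun s => clarkeDirDeriv j s 1) := by
  intro s y hy
  obtain ⟨y', hy1', hy2'⟩ := exists_between hy
  have hev : ∀ᶠ p : ℝ × ℝ in nhds s ×ˢ nhdsWithin 0 (Set.Ioi (0:ℝ)),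
      (j (p.1 + p.2 * 1) - j p.1) / p.2 < y' := by
    apply eventually_lt_of_limsup_lt hy1' (clarke_isBoundedUnder_le hj s 1)
  rw [Filter.eventually_prod_iff] at hev
  obtain ⟨pa, hpa, pb, hpb, hev⟩ := hev
  filter_upwards [interior_mem_nhds.2 hpa] with u' hu'
  have hle : clarkeDirDeriv j u' 1 ≤ y' := by
    apply limsup_le_of_le (clarke_isCoboundedUnder_le hj u' 1)
    have hpa' : ∀ᶠ x in nhds u', pa x :=
      mem_of_superset (isOpen_interior.mem_nhds hu') interior_subset
    filter_upwards [hpa'.prod_mk hpb] with p hp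
    exact (hev hp.1 hp.2).le
  exact lt_of_le_of_lt hle hy2'

lemma clarke_measurable {j : ℝ → ℝ} (hj : LocallyLipschitz j) :
    Measurable (fun s => clarkeDirDeriv j s 1) :=
  (clarke_usc hj).measurable

set_option synthInstance.maxHeartbeats 1000000 in
/-- the set of `L²` selections of the Clarke subdifferential is nonempty,
bounded, closed and convex, with an explicit bound. -/
theorem selection_set_properties
    {Γ : Type*} [MeasurableSpace Γ] (σ : Measure Γ) [IsFiniteMeasure σ]
    (j : ℝ → ℝ) (hj : LocallyLipschitz j)
    (c₁ c₂ : ℝ) (hc₁ : 0 < c₁) (hc₂ : 0 < c₂)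
    (hgrowth : ∀ u ξ : ℝ, ξ ∈ clarkeSubdiff j u → |ξ| ≤ c₁ + c₂ * |u|)
    (S : Lp ℝ 2 σ → Set (Lp ℝ 2 σ))
    (hS : ∀ u : Lp ℝ 2 σ, S u = {ξ : Lp ℝ 2 σ | ∀ᵐ x ∂σ, ξ x ∈ clarkeSubdiff j (u x)}) :
    ∀ u : Lp ℝ 2 σ,
      (S u).Nonempty ∧ Bornology.IsBounded (S u) ∧ IsClosed (S u) ∧ Convex ℝ (S u) ∧
      ∀ ξ ∈ S u, ‖ξ‖ ^ 2 ≤ 2 * c₁ ^ 2 * (σ Set.univ).toReal + 2 * c₂ ^ 2 * ‖u‖ ^ 2 := by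
  intro u
  set g : ℝ → ℝ := fun s => clarkeDirDeriv j s 1 with hg
  have hgmem : ∀ s, g s ∈ clarkeSubdiff j s := fun s => clarke_mem hj s
  have hgabs : ∀ s, |g s| ≤ c₁ + c₂ * |s| := fun s => hgrowth s (g s) (hgmem s)
  -- norm-squared identity
  have hnormsq : ∀ f : Lp ℝ 2 σ, ‖f‖ ^ 2 = ∫ x, (f x) ^ 2 ∂σ := by
    intro f
    rw [← real_inner_self_eq_norm_sq, L2.inner_def]
    apply integral_congr_ae
    filter_upwards with x
    simp [RCLike.inner_apply, conj_trivial, sq]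
  have hintu : Integrable (fun x => 2 * c₂ ^ 2 * (u x) ^ 2 + 2 * c₁ ^ 2) σ :=
    (((Lp.memLp u).integrable_sq).const_mul _).add (integrable_const _)
  -- the explicit bound
  have hbound : ∀ ξ ∈ S u,
      ‖ξ‖ ^ 2 ≤ 2 * c₁ ^ 2 * (σ Set.univ).toReal + 2 * c₂ ^ 2 * ‖u‖ ^ 2 := by
    intro ξ hξ
    rw [hS u] at hξ
    have hptw : ∀ᵐ x ∂σ, (ξ x) ^ 2 ≤ 2 * c₂ ^ 2 * (u x) ^ 2 + 2 * c₁ ^ 2 := by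
      filter_upwards [hξ] with x hx
      have h1 := hgrowth (u x) (ξ x) hx
      nlinarith [abs_nonneg (ξ x), abs_nonneg (u x), sq_abs (ξ x), sq_abs (u x),
        sq_nonneg (c₁ - c₂ * |u x|), sq_nonneg (|ξ x| - (c₁ + c₂ * |u x|))]
    calc ‖ξ‖ ^ 2 = ∫ x, (ξ x) ^ 2 ∂σ := hnormsq ξ
      _ ≤ ∫ x, (2 * c₂ ^ 2 * (u x) ^ 2 + 2 * c₁ ^ 2) ∂σ :=
          integral_mono_ae (Lp.memLp ξ).integrable_sq hintu hptw
      _ = 2 * c₁ ^ 2 * (σ Set.univ).toReal + 2 * c₂ ^ 2 * ‖u‖ ^ 2 := by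
          rw [integral_add (((Lp.memLp u).integrable_sq).const_mul _) (integrable_const _),
            integral_const, integral_const_mul, hnormsq u]
          simp [smul_eq_mul, measureReal_def]
          ring
  refine ⟨?_, ?_, ?_, ?_, hbound⟩
  · -- Nonempty
    have hgm : Measurable g := clarke_measurable hj
    have haesm : AEStronglyMeasurable (fun x => g (u x)) σ :=
      (hgm.comp_aemeasurable (Lp.aestronglyMeasurable u).aemeasurable).aestronglyMeasurable
    have hb : MemLp (fun x => c₁ + c₂ * ‖u x‖) 2 σ :=
      (memLp_const c₁).add (((Lp.memLp u).norm).const_mul c₂)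
    have hmem2 : MemLp (fun x => g (u x)) 2 σ := by
      apply hb.of_le haesm
      filter_upwards with x
      have h1 := hgabs (u x)
      rw [Real.norm_eq_abs, Real.norm_eq_abs, Real.norm_eq_abs]
      exact h1.trans (le_abs_self _)
    refine ⟨hmem2.toLp _, ?_⟩
    rw [hS u]
    have hco := hmem2.coeFn_toLp
    filter_upwards [hco] with x hx
    rw [hx]
    exact hgmem (u x)
  · -- Bounded
    set B := 2 * c₁ ^ 2 * (σ Set.univ).toReal + 2 * c₂ ^ 2 * ‖u‖ ^ 2 with hB
    have hB0 : 0 ≤ B := by positivity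
    have hsub : S u ⊆ Metric.closedBall (0 : Lp ℝ 2 σ) (Real.sqrt B) := by
      intro ξ hξ
      rw [Metric.mem_closedBall, dist_zero_right]
      have h2 := hbound ξ hξ
      have h3 : ‖ξ‖ = Real.sqrt (‖ξ‖ ^ 2) := by
        rw [Real.sqrt_sq (norm_nonneg ξ)]
      rw [h3]
      exact Real.sqrt_le_sqrt h2
    exact Metric.isBounded_closedBall.subset hsub
  · -- Closed
    rw [hS u]
    apply IsSeqClosed.isClosed
    intro f ξ hf hlim
    haveI : Fact ((1 : ENNReal) ≤ 2) := ⟨one_le_two⟩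
    have htm := tendstoInMeasure_of_tendsto_Lp hlim
    obtain ⟨ns, -, hns⟩ := htm.exists_seq_tendsto_ae
    have hall : ∀ᵐ x ∂σ, ∀ i, f (ns i) x ∈ clarkeSubdiff j (u x) :=
      ae_all_iff.2 fun i => hf (ns i)
    filter_upwards [hns, hall] with x hx hxall
    intro v
    have htv : Tendsto (fun i => (f (ns i) : Γ → ℝ) x * v) atTop (nhds (ξ x * v)) :=
      hx.mul_const v
    exact le_of_tendsto htv (Eventually.of_forall fun i => hxall i v)
  · -- Convex
    rw [hS u]
    intro ξ hξ η hη a b ha hb hab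
    have h1 := Lp.coeFn_add (a • ξ) (b • η)
    have h2 := Lp.coeFn_smul a ξ
    have h3 := Lp.coeFn_smul b η
    filter_upwards [hξ, hη, h1, h2, h3] with x hx1 hx2 hx3 hx4 hx5
    intro v
    rw [hx3]
    simp only [Pi.add_apply]
    rw [hx4, hx5]
    simp only [Pi.smul_apply, smul_eq_mul]
    have hv1 := mul_le_mul_of_nonneg_left (hx1 v) ha
    have hv2 := mul_le_mul_of_nonneg_left (hx2 v) hb
    calc (a * ξ x + b * η x) * v = a * (ξ x * v) + b * (η x * v) := by ring
      _ ≤ a * clarkeDirDeriv j (u x) v + b * clarkeDirDeriv j (u x) v := add_le_add hv1 hv2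
      _ = clarkeDirDeriv j (u x) v := by rw [← add_mul, hab, one_mul]
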